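/- Suppose ℓ takes values in [0, M], there exist a, b ∈ Y' with ℓ(a, b) = M and there exist c, d ∈ Y' with ℓ(c, d) = 0, and let ℋ be the set of all measurable functions from X to Y'. Suppose D₁ and D₂ are probability measures on X with densities p₁ and p₂ with respect to a σ-finite measure μ. Then the one-sided supremum satisfies sup_{h₁, h₂ ∈ ℋ} ( L_{D₁}(h₁, h₂) − L_{D₂}(h₁, h₂) ) = M · ∫_X max{p₁(x) − p₂(x), 0} dμ(x). -/

import Mathlib

open MeasureTheory

lemma integral_wd_ofReal {X : Type*} [MeasurableSpace X] (μ : Measure X) (p : X → ℝ)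
    (hp : Measurable p) (hp0 : ∀ x, 0 ≤ p x) (g : X → ℝ) :
    ∫ x, g x ∂(μ.withDensity fun x => ENNReal.ofReal (p x)) = ∫ x, p x * g x ∂μ := by
  have h : (fun x => ENNReal.ofReal (p x)) = fun x => ((p x).toNNReal : ENNReal) := rfl
  rw [h, integral_withDensity_eq_integral_smul hp.real_toNNReal]
  congr 1
  ext x
  simp [NNReal.smul_def, Real.coe_toNNReal _ (hp0 x)]

lemma integrable_of_wd_prob {X : Type*} [MeasurableSpace X] (μ : Measure X) (p : X → ℝ)
    (hp : Measurable p) (hp0 : ∀ x, 0 ≤ p x)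
    (h1 : (μ.withDensity fun x => ENNReal.ofReal (p x)) Set.univ = 1) :
    Integrable p μ := by
  refine ⟨hp.aestronglyMeasurable, ?_⟩
  rw [MeasureTheory.withDensity_apply _ MeasurableSet.univ, Measure.restrict_univ] at h1
  unfold HasFiniteIntegral
  have : ∀ x, ‖p x‖ₑ = ENNReal.ofReal (p x) := fun x =>
    Real.enorm_eq_ofReal (hp0 x)
  simp_rw [this, h1]
  exact ENNReal.one_lt_top

/-- Expected loss `L_D(h₁, h₂) = ∫ ℓ(h₁ x, h₂ x) dD(x)`. -/
noncomputable def expLoss {X Y' : Type*} [MeasurableSpace X] (ℓ : Y' → Y' → ℝ)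
    (D : Measure X) (h₁ h₂ : X → Y') : ℝ :=
  ∫ x, ℓ (h₁ x) (h₂ x) ∂D

/-- If `ℓ` takes values in `[0, M]`, attains both `M` and `0`, and `ℋ` is the class of
all measurable functions, then the one-sided supremum
`sup_{h₁,h₂ ∈ ℋ} (L_{D₁}(h₁,h₂) − L_{D₂}(h₁,h₂))` equals `M ∫ max(p₁ − p₂, 0) dμ`. -/
theorem one_sided_disc_eq {X Y' : Type*} [MeasurableSpace X] [MeasurableSpace Y']
    (ℓ : Y' → Y' → ℝ) (M : ℝ)
    (hmeas : Measurable fun p : Y' × Y' => ℓ p.1 p.2)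
    (hnonneg : ∀ a b, 0 ≤ ℓ a b) (hbound : ∀ a b, ℓ a b ≤ M)
    (hattainM : ∃ a b, ℓ a b = M) (hattain0 : ∃ c d, ℓ c d = 0)
    (μ : Measure X) [SigmaFinite μ]
    (p₁ p₂ : X → ℝ) (hp₁ : Measurable p₁) (hp₂ : Measurable p₂)
    (hp₁0 : ∀ x, 0 ≤ p₁ x) (hp₂0 : ∀ x, 0 ≤ p₂ x)
    (D₁ D₂ : Measure X) [IsProbabilityMeasure D₁] [IsProbabilityMeasure D₂]
    (hD₁ : D₁ = μ.withDensity fun x => ENNReal.ofReal (p₁ x))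
    (hD₂ : D₂ = μ.withDensity fun x => ENNReal.ofReal (p₂ x)) :
    sSup {r | ∃ h₁ ∈ {h : X → Y' | Measurable h}, ∃ h₂ ∈ {h : X → Y' | Measurable h},
        r = expLoss ℓ D₁ h₁ h₂ - expLoss ℓ D₂ h₁ h₂} =
      M * ∫ x, max (p₁ x - p₂ x) 0 ∂μ := by
  obtain ⟨a, b, hab⟩ := hattainM
  obtain ⟨c, d, hcd⟩ := hattain0
  have hM0 : 0 ≤ M := hab ▸ hnonneg a b
  -- integrability of p₁, p₂
  have hp₁int : Integrable p₁ μ := integrable_of_wd_prob μ p₁ hp₁ hp₁0 (by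
    rw [← hD₁]; exact measure_univ)
  have hp₂int : Integrable p₂ μ := integrable_of_wd_prob μ p₂ hp₂ hp₂0 (by
    rw [← hD₂]; exact measure_univ)
  have hmax_int : Integrable (fun x => max (p₁ x - p₂ x) 0) μ := by
    refine hp₁int.mono ((hp₁.sub hp₂).max measurable_const).aestronglyMeasurable
      (Filter.Eventually.of_forall fun x => ?_)
    have h1 : max (p₁ x - p₂ x) 0 ≤ p₁ x := by
      rcases max_cases (p₁ x - p₂ x) 0 with ⟨h, _⟩ | ⟨h, _⟩ <;> rw [h]
      · linarith [hp₂0 x]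
      · exact hp₁0 x
    rw [Real.norm_eq_abs, Real.norm_eq_abs, abs_of_nonneg (le_max_right _ _),
      abs_of_nonneg (hp₁0 x)]
    exact h1
  -- key: the difference of expected losses as one integral
  have key : ∀ h₁ h₂ : X → Y', Measurable h₁ → Measurable h₂ →
      expLoss ℓ D₁ h₁ h₂ - expLoss ℓ D₂ h₁ h₂
        = ∫ x, (p₁ x - p₂ x) * ℓ (h₁ x) (h₂ x) ∂μ := by
    intro h₁ h₂ hm₁ hm₂
    have hfmeas : Measurable fun x => ℓ (h₁ x) (h₂ x) := hmeas.comp (hm₁.prodMk hm₂)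
    have hbd : ∃ C, ∀ x, ‖ℓ (h₁ x) (h₂ x)‖ ≤ C :=
      ⟨M, fun x => by rw [Real.norm_eq_abs, abs_of_nonneg (hnonneg _ _)]; exact hbound _ _⟩
    have hi₁ : Integrable (fun x => ℓ (h₁ x) (h₂ x) * p₁ x) μ :=
      hp₁int.bdd_mul hfmeas.aestronglyMeasurable (Filter.Eventually.of_forall hbd.choose_spec)
    have hi₂ : Integrable (fun x => ℓ (h₁ x) (h₂ x) * p₂ x) μ :=
      hp₂int.bdd_mul hfmeas.aestronglyMeasurable (Filter.Eventually.of_forall hbd.choose_spec)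
    rw [expLoss, expLoss, hD₁, hD₂,
      integral_wd_ofReal μ p₁ hp₁ hp₁0, integral_wd_ofReal μ p₂ hp₂ hp₂0]
    have hi₁' : Integrable (fun x => p₁ x * ℓ (h₁ x) (h₂ x)) μ := by
      simpa [mul_comm] using hi₁
    have hi₂' : Integrable (fun x => p₂ x * ℓ (h₁ x) (h₂ x)) μ := by
      simpa [mul_comm] using hi₂
    rw [← integral_sub hi₁' hi₂']
    congr 1; ext x; ring
  -- the attaining pair
  set h₁ : X → Y' := fun x => if p₂ x < p₁ x then a else c with hh₁
  set h₂ : X → Y' := fun x => if p₂ x < p₁ x then b else d with hh₂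
  have hms : MeasurableSet {x | p₂ x < p₁ x} := measurableSet_lt hp₂ hp₁
  have hm₁ : Measurable h₁ := Measurable.ite hms measurable_const measurable_const
  have hm₂ : Measurable h₂ := Measurable.ite hms measurable_const measurable_const
  have hpt : ∀ x, (p₁ x - p₂ x) * ℓ (h₁ x) (h₂ x) = M * max (p₁ x - p₂ x) 0 := by
    intro x
    by_cases h : p₂ x < p₁ x
    · simp only [hh₁, hh₂, if_pos h, hab]
      rw [max_eq_left (by linarith)]; ring
    · simp only [hh₁, hh₂, if_neg h, hcd]
      rw [max_eq_right (by push_neg at h; linarith)]; ring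
  have hattain : expLoss ℓ D₁ h₁ h₂ - expLoss ℓ D₂ h₁ h₂
      = M * ∫ x, max (p₁ x - p₂ x) 0 ∂μ := by
    rw [key h₁ h₂ hm₁ hm₂]
    simp_rw [hpt]
    rw [integral_const_mul]
  -- upper bound for every element
  have hub : ∀ r ∈ {r | ∃ h₁ ∈ {h : X → Y' | Measurable h},
      ∃ h₂ ∈ {h : X → Y' | Measurable h},
      r = expLoss ℓ D₁ h₁ h₂ - expLoss ℓ D₂ h₁ h₂},
      r ≤ M * ∫ x, max (p₁ x - p₂ x) 0 ∂μ := by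
    rintro r ⟨g₁, hg₁, g₂, hg₂, rfl⟩
    rw [key g₁ g₂ hg₁ hg₂]
    have hfmeas : Measurable fun x => ℓ (g₁ x) (g₂ x) := hmeas.comp (hg₁.prodMk hg₂)
    have hbd : ∃ C, ∀ x, ‖ℓ (g₁ x) (g₂ x)‖ ≤ C :=
      ⟨M, fun x => by rw [Real.norm_eq_abs, abs_of_nonneg (hnonneg _ _)]; exact hbound _ _⟩
    have hiL : Integrable (fun x => (p₁ x - p₂ x) * ℓ (g₁ x) (g₂ x)) μ := by
      have := (hp₁int.sub hp₂int).bdd_mul hfmeas.aestronglyMeasurable (Filter.Eventually.of_forall hbd.choose_spec)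
      simpa [mul_comm] using this
    calc ∫ x, (p₁ x - p₂ x) * ℓ (g₁ x) (g₂ x) ∂μ
        ≤ ∫ x, M * max (p₁ x - p₂ x) 0 ∂μ := by
          refine integral_mono hiL (hmax_int.const_mul M) fun x => ?_
          by_cases h : 0 ≤ p₁ x - p₂ x
          · rw [max_eq_left h]
            exact mul_le_mul_of_nonneg_left (hbound _ _) h |>.trans_eq (mul_comm _ _)
          · push_neg at h
            rw [max_eq_right h.le]
            have : (p₁ x - p₂ x) * ℓ (g₁ x) (g₂ x) ≤ 0 :=
              mul_nonpos_of_nonpos_of_nonneg h.le (hnonneg _ _)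
            linarith
      _ = M * ∫ x, max (p₁ x - p₂ x) 0 ∂μ := integral_const_mul M _
  have hmem : M * ∫ x, max (p₁ x - p₂ x) 0 ∂μ ∈ {r | ∃ h₁ ∈ {h : X → Y' | Measurable h},
      ∃ h₂ ∈ {h : X → Y' | Measurable h},
      r = expLoss ℓ D₁ h₁ h₂ - expLoss ℓ D₂ h₁ h₂} :=
    ⟨h₁, hm₁, h₂, hm₂, hattain.symm⟩
  exact le_antisymm (csSup_le ⟨_, hmem⟩ hub) (le_csSup ⟨_, hub⟩ hmem)
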